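/- For every Dyck word x of length 2k, the sequence P(x) = (x_0, x_1, ..., x_{2k}), where x_0 = x and x_i is obtained from x_{i−1} by flipping the bit at position a_i (with π(x) = (a_1,...,a_{2k})), is a path in the graph G_k that starts at x and ends at the complement x̄ of x. -/

import Mathlib

/-- `x ∈ B_k`: bitstring of length `2k` with weight `k` or `k+1`. -/
def inB (k : ℕ) (x : List Bool) : Prop :=
  x.length = 2*k ∧ (x.count true = k ∨ x.count true = k+1)

/-- Dyck word: equally many 1s and 0s, every prefix has at least as many 1s as 0s. -/
def isDyck (x : List Bool) : Prop :=
  x.count true = x.count false ∧ ∀ n, (x.take n).count false ≤ (x.take n).count true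

/-- Complement of the reverse. -/
def mirror (x : List Bool) : List Bool := x.reverse.map (fun b => !b)

/-- Bitwise complement. -/
def compl (x : List Bool) : List Bool := x.map (fun b => !b)

/-- Specification of the recursively defined bit-flip sequence `π`. -/
def IsPiFun (π : List Bool → List ℕ) : Prop :=
  π [] = [] ∧ ∀ u v : List Bool, isDyck u → isDyck v →
    π (true :: u ++ false :: v) =
      (u.length + 2) :: ((π (mirror u)).map (fun a => u.length + 2 - a))
        ++ 1 :: ((π v).map (fun a => u.length + 2 + a))

/-- Flip the bit at (1-indexed) position `a`. -/
def flipBit (y : List Bool) (a : ℕ) : List Bool := y.set (a-1) (!(y.getD (a-1) false))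

/-- The path `P(x)`, as the list of vertices obtained by flipping bits in order `π x`. -/
def pathOf (π : List Bool → List ℕ) (x : List Bool) : List (List Bool) :=
  List.scanl flipBit x (π x)

/-- Adjacency in `G_k`: both vertices in `B_k`, differing in exactly one position. -/
def GkAdj (k : ℕ) (x y : List Bool) : Prop :=
  inB k x ∧ inB k y ∧ (List.range (2*k)).countP (fun i => x.getD i false != y.getD i false) = 1

/-- Adjacency in `G_k^+`: a `G_k` edge or a complement edge. -/
def GkPlusAdj (k : ℕ) (x y : List Bool) : Prop :=
  GkAdj k x y ∨ (inB k x ∧ inB k y ∧ (y = compl x ∨ x = compl y))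

-- basic count lemmas
lemma count_true_add_count_false (l : List Bool) : l.count true + l.count false = l.length := by
  induction l with
  | nil => simp
  | cons b t ih => cases b <;> simp [List.count_cons] <;> omega

lemma count_true_map_not (l : List Bool) : (l.map (fun b => !b)).count true = l.count false := by
  induction l with
  | nil => simp
  | cons b t ih => cases b <;> simp [List.count_cons, ih]

lemma count_false_map_not (l : List Bool) : (l.map (fun b => !b)).count false = l.count true := by
  induction l with
  | nil => simp
  | cons b t ih => cases b <;> simp [List.count_cons, ih]

lemma compl_def (l : List Bool) : compl l = l.map (fun b => !b) := rfl
lemma mirror_length (l : List Bool) : (mirror l).length = l.length := by simp [mirror]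
lemma compl_length (l : List Bool) : (compl l).length = l.length := by rw [compl_def]; simp
lemma map_not_not (l : List Bool) : (l.map (fun b => !b)).map (fun b => !b) = l := by
  induction l with
  | nil => rfl
  | cons b t ih => simp [ih]
lemma mirror_mirror (l : List Bool) : mirror (mirror l) = l := by
  rw [mirror, mirror, ← List.map_reverse, List.reverse_reverse, map_not_not]
lemma compl_mirror (l : List Bool) : compl (mirror l) = l.reverse := by
  rw [mirror, compl_def, map_not_not]
lemma mirror_reverse (l : List Bool) : mirror (l.reverse) = compl l := by
  rw [mirror, compl_def, List.reverse_reverse]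
lemma count_true_mirror (l : List Bool) : (mirror l).count true = l.count false := by
  rw [mirror, count_true_map_not, List.count_reverse]
lemma count_true_compl (l : List Bool) : (compl l).count true = l.count false := by
  rw [compl_def, count_true_map_not]

-- flipBit basics
lemma flipBit_length (y : List Bool) (a : ℕ) : (flipBit y a).length = y.length := by
  simp [flipBit]

lemma flipBit_one (b : Bool) (l : List Bool) : flipBit (b :: l) 1 = (!b) :: l := by
  simp [flipBit]

lemma flipBit_cons (b : Bool) (l : List Bool) (a : ℕ) (h : 1 ≤ a) :
    flipBit (b :: l) (a+1) = b :: flipBit l a := by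
  obtain ⟨a, rfl⟩ := Nat.exists_eq_add_of_le h
  simp [flipBit, Nat.add_comm 1 a]

lemma flipBit_append_left (p q : List Bool) (a : ℕ) (h1 : 1 ≤ a) (h2 : a ≤ p.length) :
    flipBit (p ++ q) a = flipBit p a ++ q := by
  have hlt : a - 1 < p.length := by omega
  rw [flipBit, flipBit, List.getD_append _ _ _ _ hlt, List.set_append]
  simp [hlt]

lemma flipBit_append_right (p q : List Bool) (a : ℕ) (h : p.length < a) :
    flipBit (p ++ q) a = p ++ flipBit q (a - p.length) := by
  have h1 : ¬ (a - 1 < p.length) := by omega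
  have h2 : p.length ≤ a - 1 := by omega
  have h3 : a - p.length - 1 = a - 1 - p.length := by omega
  rw [flipBit, flipBit, List.getD_append_right _ _ _ _ h2, List.set_append, ← h3]
  simp [h1]

-- scanl lemmas
lemma scanl_ne_nil {α β : Type*} (f : β → α → β) (b : β) (l : List α) :
    List.scanl f b l ≠ [] := by
  cases l <;> simp [List.scanl]

lemma head?_scanl {α β : Type*} (f : β → α → β) (b : β) (l : List α) :
    (List.scanl f b l).head? = some b := by
  cases l <;> simp [List.scanl]

lemma getLast?_scanl {α β : Type*} (f : β → α → β) (b : β) (l : List α) :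
    (List.scanl f b l).getLast? = some (List.foldl f b l) := by
  induction l generalizing b with
  | nil => simp [List.scanl]
  | cons a t ih =>
      rw [List.scanl_cons, List.foldl_cons, ← ih (f b a)]
      obtain ⟨c, l, hcl⟩ := List.exists_cons_of_ne_nil (scanl_ne_nil f (f b a) t)
      rw [hcl, List.getLast?_cons_cons]

lemma scanl_append {α β : Type*} (f : β → α → β) (b : β) (l₁ l₂ : List α) :
    List.scanl f b (l₁ ++ l₂) =
      (List.scanl f b l₁).dropLast ++ List.scanl f (List.foldl f b l₁) l₂ := by
  induction l₁ generalizing b with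
  | nil => simp [List.scanl]
  | cons a t ih =>
      rw [List.cons_append, List.scanl_cons, ih (f b a), List.scanl_cons, List.foldl_cons]
      have h : ([b] ++ List.scanl f (f b a) t).dropLast = [b] ++ (List.scanl f (f b a) t).dropLast := by
        rw [List.dropLast_append_of_ne_nil (scanl_ne_nil f (f b a) t)]
      rw [List.dropLast_cons_of_ne_nil (scanl_ne_nil f (f b a) t), List.cons_append]

lemma mem_scanl {α β : Type*} (f : β → α → β) (b : β) (l : List α) {c : β}
    (h : c ∈ List.scanl f b l) : c = b ∨ ∃ b' a, a ∈ l ∧ c = f b' a := by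
  induction l generalizing b with
  | nil => simp [List.scanl] at h; exact Or.inl h
  | cons a t ih =>
      rw [List.scanl_cons] at h
      rcases List.mem_cons.1 h with h | h
      · exact Or.inl h
      · rcases ih (f b a) h with h | ⟨b', a', ha', rfl⟩
        · exact Or.inr ⟨b, a, by simp, h⟩
        · exact Or.inr ⟨b', a', by simp [ha'], rfl⟩

lemma scanl_map_flip (g : List Bool → List Bool) (h : ℕ → ℕ) (n : ℕ) (l : List ℕ)
    (H : ∀ y : List Bool, y.length = n → ∀ a ∈ l, flipBit (g y) (h a) = g (flipBit y a)) :
    ∀ y : List Bool, y.length = n →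
      List.scanl flipBit (g y) (l.map h) = (List.scanl flipBit y l).map g := by
  induction l with
  | nil => intro y hy; simp [List.scanl]
  | cons a t ih =>
      intro y hy
      rw [List.map_cons, List.scanl_cons, List.scanl_cons, List.map_cons]
      have h1 : flipBit (g y) (h a) = g (flipBit y a) := H y hy a (by simp)
      rw [h1, ih (fun y hy a ha => H y hy a (by simp [ha])) (flipBit y a)
        (by rw [flipBit_length, hy])]

-- flipBit on transformed lists
lemma flipBit_map_not (l : List Bool) (a : ℕ) (h1 : 1 ≤ a) (h2 : a ≤ l.length) :
    flipBit (l.map (fun b => !b)) a = (flipBit l a).map (fun b => !b) := by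
  have hlt : a - 1 < l.length := by omega
  rw [flipBit, flipBit, List.getD_eq_getElem _ _ (by simpa using hlt),
    List.getD_eq_getElem _ _ hlt]
  apply List.ext_getElem (by simp)
  intro i hi1 hi2
  simp only [List.getElem_set, List.getElem_map]
  split <;> simp

lemma flipBit_reverse (l : List Bool) (a : ℕ) (h1 : 1 ≤ a) (h2 : a ≤ l.length) :
    flipBit l.reverse (l.length + 1 - a) = (flipBit l a).reverse := by
  have hlt : a - 1 < l.length := by omega
  have hlt2 : l.length + 1 - a - 1 < l.length := by omega
  rw [flipBit, flipBit, List.getD_eq_getElem _ _ (by simpa using hlt2),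
    List.getD_eq_getElem _ _ hlt]
  apply List.ext_getElem (by simp)
  intro i hi1 hi2
  simp only [List.length_set, List.length_reverse] at hi1 hi2
  simp only [List.getElem_set, List.getElem_reverse, List.length_set]
  by_cases hc : l.length + 1 - a - 1 = i
  · rw [if_pos hc, if_pos (by omega)]
    have e : l.length - 1 - (l.length + 1 - a - 1) = a - 1 := by omega
    simp [e]
  · rw [if_neg hc, if_neg (by omega)]

lemma flipBit_mirror (l : List Bool) (a : ℕ) (h1 : 1 ≤ a) (h2 : a ≤ l.length) :
    flipBit (mirror l) (l.length + 1 - a) = mirror (flipBit l a) := by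
  rw [mirror, mirror,
    flipBit_map_not _ _ (by omega) (by rw [List.length_reverse]; omega),
    flipBit_reverse l a h1 h2]

-- Dyck lemmas
lemma isDyck_nil : isDyck [] := ⟨rfl, fun n => by simp⟩

lemma take_cons_pos {α : Type*} (a : α) (l : List α) (n : ℕ) (h : 0 < n) :
    (a :: l).take n = a :: l.take (n-1) := by
  cases n with
  | zero => omega
  | succ m => simp

lemma dyck_count_drop (u : List Bool) (hu : isDyck u) (m : ℕ) :
    (u.drop m).count true ≤ (u.drop m).count false := by
  have h0 := hu.1
  have h1 := hu.2 m
  have h2 : u.take m ++ u.drop m = u := List.take_append_drop m u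
  have e1 : (u.take m).count true + (u.drop m).count true = u.count true := by
    rw [← List.count_append, h2]
  have e2 : (u.take m).count false + (u.drop m).count false = u.count false := by
    rw [← List.count_append, h2]
  omega

lemma isDyck_mirror (u : List Bool) (hu : isDyck u) : isDyck (mirror u) := by
  constructor
  · rw [count_true_mirror, mirror, count_false_map_not, List.count_reverse, hu.1]
  · intro n
    rw [mirror, ← List.map_take, List.take_reverse, List.map_reverse,
      List.count_reverse, List.count_reverse, count_true_map_not, count_false_map_not]
    exact dyck_count_drop u hu _

lemma dyck_decomp (x : List Bool) (hx : isDyck x) (hne : x ≠ []) :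
    ∃ u v, isDyck u ∧ isDyck v ∧ x = true :: u ++ false :: v := by
  classical
  have hQ : ∃ m, 0 < m ∧ (x.take m).count false = (x.take m).count true := by
    refine ⟨x.length, List.length_pos_iff.2 hne, ?_⟩
    rw [List.take_length]; exact hx.1.symm
  obtain ⟨n, ⟨hn0, hneq⟩, hmin0⟩ :
      ∃ n, (0 < n ∧ (x.take n).count false = (x.take n).count true) ∧
        ∀ m, m < n → ¬(0 < m ∧ (x.take m).count false = (x.take m).count true) :=
    ⟨Nat.find hQ, Nat.find_spec hQ, fun m hm => Nat.find_min hQ hm⟩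
  have hmin : ∀ m, 0 < m → m < n → (x.take m).count false < (x.take m).count true := by
    intro m hm0 hmn
    have h3 : ¬((x.take m).count false = (x.take m).count true) :=
      fun h => hmin0 m hmn ⟨hm0, h⟩
    have h2 := hx.2 m
    omega
  have hnle : n ≤ x.length := by
    by_contra h
    exact hmin0 x.length (by omega)
      ⟨List.length_pos_iff.2 hne, by rw [List.take_length]; exact hx.1.symm⟩
  have hn2 : 2 ≤ n := by
    by_contra h
    have hn1 : n = 1 := by omega
    rw [hn1] at hneq
    obtain ⟨b, t, rfl⟩ : ∃ b t, x = b :: t := by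
      cases x with
      | nil => exact absurd rfl hne
      | cons b t => exact ⟨b, t, rfl⟩
    cases b <;> simp [List.count_cons] at hneq
  obtain ⟨b, t, rfl⟩ : ∃ b t, x = b :: t := by
    cases x with
    | nil => exact absurd rfl hne
    | cons b t => exact ⟨b, t, rfl⟩
  have hb : b = true := by
    have h5 := hmin 1 (by omega) (by omega)
    cases b
    · simp [List.count_cons] at h5
    · rfl
  subst hb
  have hlen : n - 2 < t.length := by simp at hnle; omega
  have htake : (true :: t).take n = true :: t.take (n-1) :=
    take_cons_pos _ _ _ (by omega)
  obtain ⟨c, hc⟩ : ∃ c : Bool, t[n-2]'hlen = c := ⟨_, rfl⟩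
  obtain ⟨u, hu⟩ : ∃ u, t.take (n-2) = u := ⟨_, rfl⟩
  obtain ⟨v, hv⟩ : ∃ v, t.drop (n-1) = v := ⟨_, rfl⟩
  have hulen : u.length = n - 2 := by rw [← hu, List.length_take]; omega
  have ht : t = u ++ c :: v := by
    rw [← hu, ← hc, ← hv]
    conv_lhs => rw [← List.take_append_drop (n-2) t]
    congr 1
    rw [List.drop_eq_getElem_cons hlen]
    have h9 : n - 2 + 1 = n - 1 := by omega
    rw [h9]
  have htk2 : t.take (n-1) = u ++ [c] := by
    have h9 : n - 1 = (n-2) + 1 := by omega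
    rw [h9, List.take_succ, hu]
    congr 1
    rw [List.getElem?_eq_getElem hlen, hc]
    rfl
  rw [htake, htk2] at hneq
  simp only [List.count_cons, List.count_append] at hneq
  have hmn1 := hmin (n-1) (by omega) (by omega)
  have htake1 : (true :: t).take (n-1) = true :: u := by
    rw [take_cons_pos _ _ _ (by omega)]
    have h9 : n - 1 - 1 = n - 2 := by omega
    rw [h9, hu]
  rw [htake1] at hmn1
  simp only [List.count_cons] at hmn1
  have hcf : c = false := by
    cases c
    · rfl
    · simp at hneq hmn1; omega
  subst hcf
  have hueq : u.count true = u.count false := by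
    simp at hneq hmn1
    omega
  have hdrop : (true :: t).drop n = v := by
    have h9 : n = (n-1) + 1 := by omega
    rw [h9, List.drop_succ_cons, hv]
  have htkn : (true :: t).take n = true :: (u ++ [false]) := by
    rw [htake, htk2]
  have hct : ((true :: t).take n).count true = u.count true + 1 := by
    rw [htkn]; simp [List.count_cons, List.count_append]
  have hcfn : ((true :: t).take n).count false = u.count false + 1 := by
    rw [htkn]; simp [List.count_cons, List.count_append]
  have hsplit : ∀ b : Bool, ((true :: t).take n).count b + v.count b = (true :: t).count b := by
    intro b
    rw [← hdrop, ← List.count_append, List.take_append_drop]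
  refine ⟨u, v, ⟨hueq, ?_⟩, ⟨?_, ?_⟩, by rw [ht]; simp⟩
  · intro j
    rcases le_or_gt u.length j with hj | hj
    · rw [List.take_of_length_le hj]; omega
    · have hju : u.take j = t.take j := by
        rw [← hu, List.take_take]
        congr 1
        omega
      have h5 := hmin (j+1) (by omega) (by omega)
      have htkj : (true :: t).take (j+1) = true :: t.take j := by
        rw [take_cons_pos _ _ _ (by omega)]
        simp
      rw [htkj, ← hju] at h5
      simp only [List.count_cons] at h5
      simp at h5
      omega
  · have e1 := hsplit true
    have e2 := hsplit false
    have h6 := hx.1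
    omega
  · intro j
    have h5 := hx.2 (n + j)
    have e3 : (true :: t).take (n + j) = (true :: t).take n ++ v.take j := by
      rw [List.take_add, hdrop]
    rw [e3] at h5
    simp only [List.count_append] at h5
    omega

-- adjacency
lemma countP_flip (k : ℕ) (y : List Bool) (a : ℕ) (hy : y.length = 2*k)
    (h1 : 1 ≤ a) (h2 : a ≤ 2*k) :
    (List.range (2*k)).countP (fun i => y.getD i false != (flipBit y a).getD i false) = 1 := by
  have hlt : a - 1 < y.length := by omega
  have hcong : (List.range (2*k)).countP (fun i => y.getD i false != (flipBit y a).getD i false)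
      = (List.range (2*k)).countP (fun i => i == a - 1) := by
    apply List.countP_congr
    intro i hi
    have hik : i < 2*k := List.mem_range.1 hi
    have hiy : i < y.length := by omega
    have hif : i < (flipBit y a).length := by rw [flipBit_length]; omega
    rw [List.getD_eq_getElem _ _ hiy, List.getD_eq_getElem _ _ hif]
    simp only [flipBit, List.getElem_set, List.getD_eq_getElem _ _ hlt]
    by_cases hc : a - 1 = i
    · rw [if_pos hc]
      subst hc
      simp
    · rw [if_neg hc]
      simp
      omega
  rw [hcong]
  have : (List.range (2*k)).countP (fun i => i == a - 1) = (List.range (2*k)).count (a-1) := rfl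
  rw [this]
  exact List.count_eq_one_of_mem List.nodup_range (List.mem_range.2 (by omega))

lemma gkadj_flip (k : ℕ) (y : List Bool) (a : ℕ) (hy : y.length = 2*k)
    (h1 : 1 ≤ a) (h2 : a ≤ 2*k) (hby : inB k y) (hbz : inB k (flipBit y a)) :
    GkAdj k y (flipBit y a) :=
  ⟨hby, hbz, countP_flip k y a hy h1 h2⟩

lemma self_mem_scanl {α β : Type*} (f : β → α → β) (b : β) (l : List α) :
    b ∈ List.scanl f b l := by
  cases l <;> simp [List.scanl]

lemma chain'_scanl_flip (k : ℕ) : ∀ (l : List ℕ) (y : List Bool), y.length = 2*k →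
    (∀ a ∈ l, 1 ≤ a ∧ a ≤ 2*k) →
    (∀ z ∈ List.scanl flipBit y l, inB k z) →
    List.Chain' (GkAdj k) (List.scanl flipBit y l) := by
  intro l
  induction l with
  | nil => intro y _ _ _; simp [List.scanl]; exact List.isChain_singleton y
  | cons a t ih =>
      intro y hy hb hm
      rw [List.scanl_cons]
      have hmem : ∀ z ∈ List.scanl flipBit (flipBit y a) t, z ∈ List.scanl flipBit y (a :: t) := by
        intro z hz
        rw [List.scanl_cons]
        exact List.mem_cons_of_mem _ hz
      refine List.isChain_cons.2 ?_
      constructor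
      · intro z hz
        rw [head?_scanl] at hz
        cases hz
        refine gkadj_flip k y a hy (hb a (by simp)).1 (hb a (by simp)).2 ?_ ?_
        · exact hm y (self_mem_scanl _ _ _)
        · exact hm _ (hmem _ (self_mem_scanl _ _ _))
      · exact ih (flipBit y a) (by rw [flipBit_length, hy])
          (fun a' ha' => hb a' (by simp [ha'])) (fun z hz => hm z (hmem z hz))

lemma dropLast_getLast?_append {α : Type*} {l : List α} {c : α} (h : l.getLast? = some c)
    (t : List α) : l.dropLast ++ c :: t = l ++ t := by
  have hne : l ≠ [] := by rintro rfl; simp at h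
  conv_rhs => rw [← List.dropLast_append_getLast hne]
  rw [List.getLast?_eq_getLast hne, Option.some_inj] at h
  rw [List.append_assoc, h]
  rfl

lemma key (π : List Bool → List ℕ) (hπ : IsPiFun π) :
    ∀ (n : ℕ) (x : List Bool), x.length = n → isDyck x →
      (π x).length = x.length ∧
      (∀ a ∈ π x, 1 ≤ a ∧ a ≤ x.length) ∧
      (∀ y ∈ pathOf π x, y.length = x.length ∧
        (y.count true = x.count true ∨ y.count true = x.count true + 1)) ∧
      (pathOf π x).getLast? = some (compl x) ∧
      (pathOf π x).Nodup := by
  intro n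
  induction n using Nat.strong_induction_on with
  | _ n ih =>
  intro x hxl hx
  rcases eq_or_ne x [] with rfl | hne
  · refine ⟨by simp [hπ.1], by simp [hπ.1], ?_, ?_, ?_⟩ <;>
      simp [pathOf, hπ.1, List.scanl, compl_def]
  obtain ⟨u, v, hu, hv, hxeq⟩ := dyck_decomp x hx hne
  subst hxeq
  have hxlen : ((true :: u) ++ (false :: v)).length = u.length + v.length + 2 := by
    simp only [List.length_append, List.length_cons]; omega
  have hn : u.length + v.length + 2 = n := by rw [← hxl, hxlen]
  have ih1 := ih u.length (by omega) (mirror u) (mirror_length u) (isDyck_mirror u hu)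
  have ih2 := ih v.length (by omega) v rfl hv
  obtain ⟨hl1, hb1, hm1, hlast1, hnd1⟩ := ih1
  obtain ⟨hl2, hb2, hm2, hlast2, hnd2⟩ := ih2
  rw [mirror_length] at hl1
  have hπx := hπ.2 u v hu hv
  set g₁ : List Bool → List Bool := fun y => true :: (mirror y ++ true :: v) with hg₁def
  set g₂ : List Bool → List Bool := fun w => false :: (compl u ++ true :: w) with hg₂def
  set P₁ := pathOf π (mirror u) with hP₁def
  set P₂ := pathOf π v with hP₂def
  -- commuting lemmas
  have hg1 : ∀ y : List Bool, y.length = u.length → ∀ a ∈ π (mirror u),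
      flipBit (g₁ y) (u.length + 2 - a) = g₁ (flipBit y a) := by
    intro y hy a ha
    obtain ⟨ha1, ha2⟩ := hb1 a ha
    rw [mirror_length] at ha2
    have h9 : u.length + 2 - a = (u.length + 1 - a) + 1 := by omega
    rw [hg₁def]
    simp only []
    rw [h9, flipBit_cons _ _ _ (by omega),
      flipBit_append_left _ _ _ (by omega) (by rw [mirror_length, hy]; omega)]
    have h8 : u.length + 1 - a = y.length + 1 - a := by omega
    rw [h8, flipBit_mirror y a ha1 (by omega)]
  have hg2 : ∀ w : List Bool, w.length = v.length → ∀ a ∈ π v,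
      flipBit (g₂ w) (u.length + 2 + a) = g₂ (flipBit w a) := by
    intro w hw a ha
    obtain ⟨ha1, ha2⟩ := hb2 a ha
    have h9 : u.length + 2 + a = (u.length + 1 + a) + 1 := by omega
    rw [hg₂def]
    simp only []
    rw [h9, flipBit_cons _ _ _ (by omega),
      flipBit_append_right _ _ _ (by rw [compl_length]; omega)]
    have h8 : u.length + 1 + a - (compl u).length = a + 1 := by rw [compl_length]; omega
    rw [h8, flipBit_cons _ _ _ ha1]
  -- scanl segment identities
  have hA : List.scanl flipBit (g₁ (mirror u)) ((π (mirror u)).map (fun a => u.length + 2 - a))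
      = P₁.map g₁ :=
    scanl_map_flip g₁ _ u.length _ hg1 (mirror u) (mirror_length u)
  have hB : List.scanl flipBit (g₂ v) ((π v).map (fun a => u.length + 2 + a))
      = P₂.map g₂ :=
    scanl_map_flip g₂ _ v.length _ hg2 v rfl
  have hflip1 : flipBit ((true :: u) ++ (false :: v)) (u.length + 2) = g₁ (mirror u) := by
    have h7 : g₁ (mirror u) = true :: (u ++ true :: v) := by
      rw [hg₁def]; simp only []; rw [mirror_mirror]
    rw [h7, List.cons_append]
    have h9 : u.length + 2 = (u.length + 1) + 1 := rfl
    rw [h9, flipBit_cons _ _ _ (by omega), flipBit_append_right _ _ _ (by omega)]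
    have h8 : u.length + 1 - u.length = 1 := by omega
    rw [h8, flipBit_one, Bool.not_false]
  have hlastA : (P₁.map g₁).getLast? = some (g₁ u.reverse) := by
    rw [List.getLast?_map, hlast1, compl_mirror]
    rfl
  have hx2 : List.foldl flipBit (g₁ (mirror u)) ((π (mirror u)).map (fun a => u.length + 2 - a))
      = g₁ u.reverse := by
    have h1 := getLast?_scanl flipBit (g₁ (mirror u))
      ((π (mirror u)).map (fun a => u.length + 2 - a))
    rw [hA, hlastA] at h1
    exact (Option.some_inj.1 h1).symm
  have hflip2 : flipBit (g₁ u.reverse) 1 = g₂ v := by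
    rw [hg₁def, hg₂def]
    simp only []
    rw [mirror_reverse, flipBit_one, Bool.not_true]
  -- the structural equation
  have hstruct : pathOf π ((true :: u) ++ (false :: v))
      = ((true :: u) ++ (false :: v)) :: (P₁.map g₁ ++ P₂.map g₂) := by
    rw [pathOf, hπx, scanl_append, List.scanl_cons, List.foldl_cons, hflip1, hA, hx2,
      List.scanl_cons, hflip2, hB]
    rw [List.dropLast_cons_of_ne_nil]
    · rw [List.cons_append]
      congr 1
      exact dropLast_getLast?_append hlastA _
    · rw [← hA]
      exact scanl_ne_nil _ _ _
  -- count bookkeeping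
  have hcu : u.count true = u.count false := hu.1
  have hcv : v.count true = v.count false := hv.1
  have hsu := count_true_add_count_false u
  have hsv := count_true_add_count_false v
  have hxc : ((true :: u) ++ (false :: v)).count true = u.count true + v.count true + 1 := by
    simp [List.count_append, List.count_cons]
  have hmuc : (mirror u).count true = u.count false := count_true_mirror u
  refine ⟨?_, ?_, ?_, ?_, ?_⟩
  · -- length of π x
    rw [hπx]
    simp only [List.length_append, List.length_cons, List.length_map, hl1, hl2, hxlen]
    omega
  · -- bounds on π x
    intro a ha
    rw [hπx] at ha
    rw [hxlen]
    simp only [List.mem_append, List.mem_cons, List.mem_map] at ha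
    rcases ha with (rfl | ⟨a', ha', rfl⟩) | (rfl | ⟨a', ha', rfl⟩)
    · omega
    · have := hb1 a' ha'
      rw [mirror_length] at this
      omega
    · omega
    · have := hb2 a' ha'
      omega
  · -- membership
    intro y hy
    rw [hstruct] at hy
    simp only [List.mem_cons, List.mem_append, List.mem_map] at hy
    rcases hy with rfl | ⟨z, hz, rfl⟩ | ⟨w, hw, rfl⟩
    · exact ⟨rfl, Or.inl rfl⟩
    · obtain ⟨hzl, hzc⟩ := hm1 z hz
      rw [mirror_length] at hzl
      rw [hmuc] at hzc
      have hzs := count_true_add_count_false z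
      have hmzc : (mirror z).count true = z.count false := count_true_mirror z
      constructor
      · rw [hg₁def]
        simp only [List.length_cons, List.length_append, mirror_length, hzl, hxlen]
        omega
      · rw [hg₁def, hxc]
        simp only [List.count_cons, List.count_append]
        simp only [hmzc]
        simp
        omega
    · obtain ⟨hwl, hwc⟩ := hm2 w hw
      have hws := count_true_add_count_false w
      have hcuc : (compl u).count true = u.count false := count_true_compl u
      constructor
      · rw [hg₂def]
        simp only [List.length_cons, List.length_append, compl_length, hwl, hxlen]
        omega
      · rw [hg₂def, hxc]
        simp only [List.count_cons, List.count_append]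
        simp only [hcuc]
        simp
        omega
  · -- getLast?
    rw [hstruct]
    have hBne : P₂.map g₂ ≠ [] := by
      intro h
      exact scanl_ne_nil flipBit v (π v) (List.map_eq_nil_iff.1 h)
    have h12 : ((true :: u ++ false :: v) :: (List.map g₁ P₁ ++ List.map g₂ P₂))
        = ((true :: u ++ false :: v) :: List.map g₁ P₁) ++ List.map g₂ P₂ := rfl
    rw [h12, List.getLast?_append_of_ne_nil _ hBne, List.getLast?_map, hlast2]
    rw [show compl ((true :: u) ++ (false :: v)) = false :: (compl u ++ true :: compl v) by
      simp [compl_def]]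
    rfl
  · -- nodup
    rw [hstruct, List.nodup_cons]
    have hlen1 : ∀ z ∈ P₁, z.length = u.length := by
      intro z hz
      have := (hm1 z hz).1
      rwa [mirror_length] at this
    have hlen2 : ∀ w ∈ P₂, w.length = v.length := fun w hw => (hm2 w hw).1
    constructor
    · -- x not in the rest
      intro hmem
      simp only [List.mem_append, List.mem_map] at hmem
      rcases hmem with ⟨z, hz, hzeq⟩ | ⟨w, hw, hweq⟩
      · rw [hg₁def, List.cons_append] at hzeq
        simp only [List.cons.injEq] at hzeq
        have h11 := List.append_inj hzeq.2.symm
          (by rw [mirror_length, hlen1 z hz])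
        simpa using h11.2
      · rw [hg₂def, List.cons_append] at hweq
        simp only [List.cons.injEq] at hweq
        exact Bool.noConfusion hweq.1
    · rw [List.nodup_append]
      refine ⟨?_, ?_, ?_⟩
      · apply hnd1.map_on
        intro y hy z hz hyz
        rw [hg₁def] at hyz
        simp only [List.cons.injEq] at hyz
        have := (List.append_inj hyz.2 (by rw [mirror_length, mirror_length, hlen1 y hy, hlen1 z hz])).1
        rw [← mirror_mirror y, this, mirror_mirror]
      · apply hnd2.map_on
        intro y hy z hz hyz
        rw [hg₂def] at hyz
        simp only [List.cons.injEq] at hyz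
        have := List.append_cancel_left hyz.2
        simpa using this
      · intro z hzA z' hzB rfl
        simp only [List.mem_map] at hzA hzB
        obtain ⟨y, _, hy⟩ := hzA
        obtain ⟨w, _, hw⟩ := hzB
        rw [← hy, hg₁def, hg₂def] at hw
        simp at hw

theorem stmt_6 (π : List Bool → List ℕ) (hπ : IsPiFun π) (k : ℕ) (x : List Bool)
    (hx : isDyck x) (hl : x.length = 2*k) :
    (pathOf π x).length = 2*k + 1 ∧
    (pathOf π x).Nodup ∧
    List.Chain' (GkAdj k) (pathOf π x) ∧
    (pathOf π x).head? = some x ∧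
    (pathOf π x).getLast? = some (compl x) ∧
    (∀ y ∈ pathOf π x, inB k y) := by
  obtain ⟨hlen, hb, hmem, hlast, hnd⟩ := key π hπ (2*k) x hl hx
  have hxk : x.count true = k := by
    have h1 := hx.1
    have h2 := count_true_add_count_false x
    have h3 := hl
    omega
  have hinB : ∀ y ∈ pathOf π x, inB k y := by
    intro y hy
    obtain ⟨h1, h2⟩ := hmem y hy
    exact ⟨by rw [h1, hl], by rw [hxk] at h2; exact h2⟩
  refine ⟨?_, hnd, ?_, ?_, hlast, hinB⟩
  · rw [pathOf, List.length_scanl, hlen, hl]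
  · rw [pathOf]
    refine chain'_scanl_flip k (π x) x hl ?_ ?_
    · intro a ha
      have := hb a ha
      rw [hl] at this
      exact this
    · exact fun z hz => hinB z hz
  · rw [pathOf, head?_scanl]
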